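/- arXiv:1811.04616 — 3 statements merged into one kernel-verified Lean document; each statement's English description precedes it below -/
import Mathlib

section
/- Let C = {1,…,k} with k ≥ 3 be a cycle, and let S₁ = {1,2}, S₂ = {2,3}, S₃ = {3,4,…,k,1}. Consider a hedonic game where every player i ∈ {1,2,3} has preferences {i} ≻ᵢ Sᵢ ≻ᵢ S_{i−1} ≻ᵢ T for all other coalitions T containing i (with S₀ = S₃), and every player j ∈ S₃ \ {1,3} most prefers S₃. Then for every partition π of C into coalitions, at least one of S₁, S₂, S₃ strongly blocks π or some player i ∈ {1,2,3} is in a singleton {i} in π. -/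
/- Players `1,…,k` of the paper are modeled as `Fin k` (player `i` ↦ `i-1`).
`S1 = {1,2}`, `S2 = {2,3}`, `S3 = {3,…,k,1}` become `{0,1}`, `{1,2}`, `univ \ {1}`.
Preferences are given by utility functions `v i`. A coalition `T` strongly
blocks the partition `π` if every member strictly prefers `T` to its own cell. -/
theorem stmt4 (k : ℕ) (hk : 3 ≤ k)
    (v : Fin k → Set (Fin k) → ℝ)
    (S1 S2 S3 : Set (Fin k))
    (hS1 : S1 = {⟨0, by omega⟩, ⟨1, by omega⟩})
    (hS2 : S2 = {⟨1, by omega⟩, ⟨2, by omega⟩})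
    (hS3 : S3 = Set.univ \ {⟨1, by omega⟩})
    -- player 1 (here `0`): {1} ≻ S1 ≻ S0 = S3 ≻ everything else containing it
    (h1a : v ⟨0, by omega⟩ {⟨0, by omega⟩} > v ⟨0, by omega⟩ S1)
    (h1b : v ⟨0, by omega⟩ S1 > v ⟨0, by omega⟩ S3)
    (h1c : ∀ T : Set (Fin k), (⟨0, by omega⟩ : Fin k) ∈ T →
      T ≠ {⟨0, by omega⟩} → T ≠ S1 → T ≠ S3 → v ⟨0, by omega⟩ S3 > v ⟨0, by omega⟩ T)
    -- player 2 (here `1`): {2} ≻ S2 ≻ S1 ≻ everything else containing it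
    (h2a : v ⟨1, by omega⟩ {⟨1, by omega⟩} > v ⟨1, by omega⟩ S2)
    (h2b : v ⟨1, by omega⟩ S2 > v ⟨1, by omega⟩ S1)
    (h2c : ∀ T : Set (Fin k), (⟨1, by omega⟩ : Fin k) ∈ T →
      T ≠ {⟨1, by omega⟩} → T ≠ S2 → T ≠ S1 → v ⟨1, by omega⟩ S1 > v ⟨1, by omega⟩ T)
    -- player 3 (here `2`): {3} ≻ S3 ≻ S2 ≻ everything else containing it
    (h3a : v ⟨2, by omega⟩ {⟨2, by omega⟩} > v ⟨2, by omega⟩ S3)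
    (h3b : v ⟨2, by omega⟩ S3 > v ⟨2, by omega⟩ S2)
    (h3c : ∀ T : Set (Fin k), (⟨2, by omega⟩ : Fin k) ∈ T →
      T ≠ {⟨2, by omega⟩} → T ≠ S3 → T ≠ S2 → v ⟨2, by omega⟩ S2 > v ⟨2, by omega⟩ T)
    -- every other player of S3 most prefers S3
    (h4 : ∀ j ∈ S3, j ≠ ⟨0, by omega⟩ → j ≠ ⟨2, by omega⟩ →
      ∀ T : Set (Fin k), j ∈ T → T ≠ S3 → v j S3 > v j T)
    -- π is a partition, given by its cells
    (π : Fin k → Set (Fin k)) (hmem : ∀ i, i ∈ π i)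
    (hpart : ∀ i j, i ∈ π j → π i = π j) :
    (∀ i ∈ S1, v i S1 > v i (π i)) ∨ (∀ i ∈ S2, v i S2 > v i (π i)) ∨
    (∀ i ∈ S3, v i S3 > v i (π i)) ∨
    (π ⟨0, by omega⟩ = {⟨0, by omega⟩} ∨ π ⟨1, by omega⟩ = {⟨1, by omega⟩} ∨
      π ⟨2, by omega⟩ = {⟨2, by omega⟩}) := by
  classical
  by_cases hA : π ⟨0, by omega⟩ = {⟨0, by omega⟩}
  · exact Or.inr (Or.inr (Or.inr (Or.inl hA)))
  by_cases hB : π ⟨1, by omega⟩ = {⟨1, by omega⟩}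
  · exact Or.inr (Or.inr (Or.inr (Or.inr (Or.inl hB))))
  by_cases hC : π ⟨2, by omega⟩ = {⟨2, by omega⟩}
  · exact Or.inr (Or.inr (Or.inr (Or.inr (Or.inr hC))))
  have mA1 : (⟨0, by omega⟩ : Fin k) ∈ S1 := by rw [hS1]; left; rfl
  have mB1 : (⟨1, by omega⟩ : Fin k) ∈ S1 := by rw [hS1]; right; rfl
  have mB2 : (⟨1, by omega⟩ : Fin k) ∈ S2 := by rw [hS2]; left; rfl
  have mC2 : (⟨2, by omega⟩ : Fin k) ∈ S2 := by rw [hS2]; right; rfl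
  have mA3 : (⟨0, by omega⟩ : Fin k) ∈ S3 := by
    rw [hS3]; exact ⟨trivial, by simp [Fin.ext_iff]⟩
  have mC3 : (⟨2, by omega⟩ : Fin k) ∈ S3 := by
    rw [hS3]; exact ⟨trivial, by simp [Fin.ext_iff]⟩
  have nA2 : (⟨0, by omega⟩ : Fin k) ∉ S2 := by rw [hS2]; simp [Fin.ext_iff]
  have nB3 : (⟨1, by omega⟩ : Fin k) ∉ S3 := by rw [hS3]; simp
  have s12 : S1 ≠ S2 := fun h => nA2 (h ▸ mA1)
  have s13 : S1 ≠ S3 := fun h => nB3 (h ▸ mB1)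
  have s23 : S2 ≠ S3 := fun h => nB3 (h ▸ mB2)
  by_cases hb2 : π ⟨1, by omega⟩ = S2
  · -- S3 strongly blocks
    have hc2 : π ⟨2, by omega⟩ = S2 := (hpart _ _ (hb2 ▸ mC2)).trans hb2
    have ha3 : π ⟨0, by omega⟩ ≠ S3 := by
      intro h
      have hcc : π ⟨2, by omega⟩ = π ⟨0, by omega⟩ := hpart _ _ (h ▸ mC3)
      exact s23 (hc2.symm.trans (hcc.trans h))
    have ha1 : π ⟨0, by omega⟩ ≠ S1 := by
      intro h
      have hbb : π ⟨1, by omega⟩ = π ⟨0, by omega⟩ := hpart _ _ (h ▸ mB1)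
      exact s12 ((hbb.symm.trans hb2).symm.trans h).symm
    refine Or.inr (Or.inr (Or.inl ?_))
    intro i hi
    by_cases hia : i = ⟨0, by omega⟩
    · subst hia; exact h1c _ (hmem _) hA ha1 ha3
    by_cases hic : i = ⟨2, by omega⟩
    · subst hic; rw [hc2]; exact h3b
    · refine h4 i hi hia hic _ (hmem i) ?_
      intro h
      exact ha3 (hpart _ _ (h ▸ mA3) |>.symm ▸ h)
  by_cases hb1 : π ⟨1, by omega⟩ = S1
  · -- S2 strongly blocks
    have ha1 : π ⟨0, by omega⟩ = S1 := (hpart _ _ (hb1 ▸ mA1)).trans hb1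
    refine Or.inr (Or.inl ?_)
    intro i hi
    rw [hS2] at hi
    simp only [Set.mem_insert_iff, Set.mem_singleton_iff] at hi
    rcases hi with rfl | rfl
    · rw [hb1]; exact h2b
    · refine h3c _ (hmem _) hC ?_ ?_
      · intro h
        have : π ⟨0, by omega⟩ = π ⟨2, by omega⟩ := hpart _ _ (h ▸ mA3)
        exact s13 (ha1.symm.trans (this.trans h))
      · intro h
        have : π ⟨1, by omega⟩ = π ⟨2, by omega⟩ := hpart _ _ (h ▸ mB2)
        exact s12 (hb1.symm.trans (this.trans h))
  · -- π b is something else; S1 strongly blocks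
    have vb1 : v ⟨1, by omega⟩ S1 > v ⟨1, by omega⟩ (π ⟨1, by omega⟩) :=
      h2c _ (hmem _) hB hb2 hb1
    have key : v ⟨0, by omega⟩ S1 > v ⟨0, by omega⟩ (π ⟨0, by omega⟩) := by
      by_cases ha3 : π ⟨0, by omega⟩ = S3
      · rw [ha3]; exact h1b
      · have ha1 : π ⟨0, by omega⟩ ≠ S1 := by
          intro h
          exact hb1 ((hpart _ _ (h ▸ mB1)).trans h)
        exact lt_trans (h1c _ (hmem _) hA ha1 ha3) h1b
    refine Or.inl ?_
    intro i hi
    rw [hS1] at hi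
    simp only [Set.mem_insert_iff, Set.mem_singleton_iff] at hi
    rcases hi with rfl | rfl
    · exact key
    · exact vb1
end

section
/- Let T be a rooted tree on player set N and suppose for each i ∈ N a coalition B_i is chosen with i ∈ B_i ⊆ desc(i), B_i connected in T, and v_j(B_i) ≥ v_j(B_j) for every j ∈ B_i. Then the partition π produced by recursively taking B_r for the root r and, for each child c of B_r, the partition of desc(c) produced recursively, is a partition of N into connected coalitions such that for every player j, v_j(π(j)) ≥ v_j(B_j). -/
open scoped Classical in
noncomputable def aux11 {N : Type*} (r : N) (parent : N → N) (B : N → Set N) : ℕ → N → N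
  | 0, j => j
  | (n+1), j =>
      if j = r then j
      else if j ∈ B (aux11 r parent B n (parent j)) then aux11 r parent B n (parent j) else j

open scoped Classical in
theorem aux11_succ {N : Type*} (r : N) (parent : N → N) (B : N → Set N) (n : ℕ) (j : N) :
    aux11 r parent B (n+1) j = if j = r then j
      else if j ∈ B (aux11 r parent B n (parent j)) then aux11 r parent B n (parent j) else j :=
  rfl

theorem aux11_zero {N : Type*} (r : N) (parent : N → N) (B : N → Set N) (j : N) :
    aux11 r parent B 0 j = j := rfl

theorem stmt11 {N : Type*} [Fintype N] (r : N) (parent : N → N)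
    (hroot : parent r = r) (hreach : ∀ i : N, ∃ k : ℕ, parent^[k] i = r)
    (desc : N → Set N) (hdesc : ∀ i, desc i = {j | ∃ k : ℕ, parent^[k] j = i})
    (G : SimpleGraph N) (hG : G = SimpleGraph.fromRel (fun a b => parent a = b))
    (v : N → Set N → ℝ) (B : N → Set N)
    (hB1 : ∀ i, i ∈ B i) (hB2 : ∀ i, B i ⊆ desc i)
    (hB3 : ∀ i, (G.induce (B i)).Connected)
    (hB4 : ∀ i, ∀ j ∈ B i, v j (B j) ≤ v j (B i)) :
    ∃ π : N → Set N,
      (∀ j, j ∈ π j) ∧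
      (∀ i j, i ∈ π j → π i = π j) ∧
      (∀ j, ∃ i, π j = B i) ∧
      (∀ j, (G.induce (π j)).Connected) ∧
      (∀ j, v j (B j) ≤ v j (π j)) := by
  classical
  set d : N → ℕ := fun j => Nat.find (hreach j) with hd
  have hdspec : ∀ j, parent^[d j] j = r := fun j => Nat.find_spec (hreach j)
  have hdzero : ∀ j, d j = 0 → j = r := by
    intro j h
    have := hdspec j
    rwa [h, Function.iterate_zero_apply] at this
  have hdr : d r = 0 := by
    have h0 : parent^[0] r = r := rfl
    exact Nat.le_zero.mp (Nat.find_le h0)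
  have hdparent : ∀ j, j ≠ r → d (parent j) < d j := by
    intro j hj
    have h1 : 1 ≤ d j := by
      rcases Nat.eq_zero_or_pos (d j) with h | h
      · exact absurd (hdzero j h) hj
      · exact h
    have hstep : parent^[d j - 1] (parent j) = r := by
      have h := hdspec j
      rw [show d j = (d j - 1) + 1 by omega] at h
      rwa [Function.iterate_succ_apply] at h
    have : d (parent j) ≤ d j - 1 := Nat.find_le hstep
    omega
  have aux11_r : ∀ n : ℕ, aux11 r parent B n r = r := by
    intro n
    cases n with
    | zero => rfl
    | succ m => rw [aux11_succ, if_pos rfl]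
  -- stability of aux11 above the depth
  have hstab : ∀ n j, d j ≤ n → aux11 r parent B (n+1) j = aux11 r parent B n j := by
    intro n
    induction n with
    | zero =>
      intro j hj
      have hjr : j = r := hdzero j (Nat.le_zero.mp hj)
      rw [hjr, aux11_r, aux11_r]
    | succ m ih =>
      intro j hj
      by_cases hjr : j = r
      · rw [hjr, aux11_r, aux11_r]
      · have hp : d (parent j) ≤ m := by
          have := hdparent j hjr
          omega
        have heq := ih (parent j) hp
        rw [aux11_succ, heq, aux11_succ, if_neg hjr]
  have hstab' : ∀ n j, d j ≤ n → aux11 r parent B n j = aux11 r parent B (d j) j := by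
    intro n
    induction n with
    | zero => intro j hj; rw [Nat.le_zero.mp hj]
    | succ m ih =>
      intro j hj
      rcases Nat.lt_or_ge (d j) (m+1) with h | h
      · have h' : d j ≤ m := by omega
        rw [hstab m j h', ih j h']
      · have : d j = m + 1 := by omega
        rw [this]
  set anchor : N → N := fun j => aux11 r parent B (d j) j with hanchor
  have hanchor_r : anchor r = r := by
    show aux11 r parent B (d r) r = r
    rw [hdr, aux11_zero]
  have hstep : ∀ j, j ≠ r →
      anchor j = if j ∈ B (anchor (parent j)) then anchor (parent j) else j := by
    intro j hj
    have h1 : 1 ≤ d j := by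
      rcases Nat.eq_zero_or_pos (d j) with h | h
      · exact absurd (hdzero j h) hj
      · exact h
    have hp : d (parent j) ≤ d j - 1 := by
      have := hdparent j hj
      omega
    have hpe : aux11 r parent B (d j - 1) (parent j) = anchor (parent j) :=
      hstab' (d j - 1) (parent j) hp
    show aux11 r parent B (d j) j = _
    rw [show d j = (d j - 1) + 1 by omega, aux11_succ, if_neg hj, hpe]
  -- j ∈ B (anchor j)
  have L1 : ∀ j, j ∈ B (anchor j) := by
    intro j
    by_cases hj : j = r
    · rw [hj, hanchor_r]; exact hB1 r
    · rw [hstep j hj]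
      by_cases hm : j ∈ B (anchor (parent j))
      · rw [if_pos hm]; exact hm
      · rw [if_neg hm]; exact hB1 j
  -- anchor is idempotent
  have L2 : ∀ j, anchor (anchor j) = anchor j := by
    have main : ∀ (n : ℕ) (j : N), d j ≤ n → anchor (anchor j) = anchor j := by
      intro n
      induction n with
      | zero =>
        intro j hj
        rw [hdzero j (Nat.le_zero.mp hj), hanchor_r, hanchor_r]
      | succ m ih =>
        intro j hj
        by_cases hjr : j = r
        · rw [hjr, hanchor_r, hanchor_r]
        · rw [hstep j hjr]
          by_cases hm : j ∈ B (anchor (parent j))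
          · rw [if_pos hm]
            exact ih (parent j) (by have := hdparent j hjr; omega)
          · rw [if_neg hm, hstep j hjr, if_neg hm]
    exact fun j => main (d j) j le_rfl
  -- edge crossing lemma
  have hcross : ∀ (i x y : N), (∃ k, parent^[k] x = i) → ¬(∃ k, parent^[k] y = i) →
      G.Adj x y → x = i ∧ y = parent i := by
    intro i x y hx hy hadj
    rw [hG, SimpleGraph.fromRel_adj] at hadj
    obtain ⟨hne, hpar⟩ := hadj
    have hxy : parent x = y := by
      rcases hpar with h | h
      · exact h
      · exfalso
        obtain ⟨k, hk⟩ := hx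
        exact hy ⟨k + 1, by rw [Function.iterate_succ_apply, h, hk]⟩
    obtain ⟨k, hk⟩ := hx
    rcases k with _ | m
    · have hxi : x = i := by simpa using hk
      exact ⟨hxi, by rw [← hxy, hxi]⟩
    · exfalso
      apply hy
      refine ⟨m, ?_⟩
      rw [← hxy, ← Function.iterate_succ_apply]
      exact hk
  -- walk lemma: a walk inside S from a descendant of i to a non-descendant forces parent i ∈ S
  have hwalk : ∀ (i : N) (S : Set N) (u w : S), (G.induce S).Walk u w →
      (∃ k, parent^[k] (u : N) = i) → ¬(∃ k, parent^[k] (w : N) = i) → parent i ∈ S := by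
    intro i S u w p
    induction p with
    | nil => intro hu hw; exact absurd hu hw
    | @cons a b c h p ih =>
      intro hu hw
      by_cases hb : ∃ k, parent^[k] (b : N) = i
      · exact ih hb hw
      · have hadj : G.Adj (a : N) (b : N) := h
        obtain ⟨_, hb2⟩ := hcross i a b hu hb hadj
        rw [← hb2]
        exact b.2
  -- no nontrivial cycles
  have hnocycle : ∀ (i a : N) (k m : ℕ), parent^[k+1] i = a → parent^[m] a = i → i = a := by
    intro i a k m h1 h2
    have hp : parent^[m + (k+1)] i = i := by
      rw [Function.iterate_add_apply, h1, h2]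
    set p := m + (k + 1) with hpdef
    have hip : parent^[p * d i] i = i := by
      rw [Function.iterate_mul]
      exact Function.iterate_fixed hp (d i)
    have hir : i = r := by
      have hle : d i ≤ p * d i := Nat.le_mul_of_pos_left (d i) (show 0 < p by omega)
      have : parent^[p * d i] i = r := by
        rw [show p * d i = (p * d i - d i) + d i by omega, Function.iterate_add_apply,
          hdspec i]
        exact Function.iterate_fixed hroot _
      rw [hip] at this
      exact this
    subst hir
    rw [← h1, Function.iterate_fixed hroot]
  -- main: anchor of everyone in B a is a (when a is its own anchor)
  have L3 : ∀ a, anchor a = a → ∀ (k : ℕ) (i : N), parent^[k] i = a → i ∈ B a → anchor i = a := by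
    intro a ha k
    induction k with
    | zero =>
      intro i hk _
      rw [Function.iterate_zero_apply] at hk
      rw [hk, ha]
    | succ m ih =>
      intro i hk hiB
      by_cases hia : i = a
      · rw [hia, ha]
      · have hir : i ≠ r := by
          intro h
          rw [h] at hk
          have har : a = r := by rw [← hk, Function.iterate_fixed hroot]
          exact hia (h.trans har.symm)
        have hnd : ¬(∃ t, parent^[t] a = i) := by
          rintro ⟨t, ht⟩
          exact hia (hnocycle i a m t hk ht)
        obtain ⟨w⟩ := (hB3 a).preconnected ⟨i, hiB⟩ ⟨a, hB1 a⟩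
        have hpmem : parent i ∈ B a := hwalk i (B a) ⟨i, hiB⟩ ⟨a, hB1 a⟩ w ⟨0, rfl⟩ hnd
        have hkp : parent^[m] (parent i) = a := by
          rw [← Function.iterate_succ_apply]
          exact hk
        have hanc_p : anchor (parent i) = a := ih (parent i) hkp hpmem
        rw [hstep i hir, hanc_p, if_pos hiB]
  refine ⟨fun j => B (anchor j), fun j => L1 j, ?_, fun j => ⟨anchor j, rfl⟩,
    fun j => hB3 (anchor j), fun j => hB4 (anchor j) j (L1 j)⟩
  intro i j hi
  have hi' : i ∈ B (anchor j) := hi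
  have hdi : i ∈ desc (anchor j) := hB2 (anchor j) hi' 
  rw [hdesc] at hdi
  obtain ⟨k, hk⟩ := hdi
  have hanc : anchor i = anchor j := L3 (anchor j) (L2 j) k i hk hi'
  show B (anchor i) = B (anchor j)
  rw [hanc]
end

section
/- Let π be a partition of players (nodes of a rooted tree) satisfying v_j(π(j)) ≥ v_j(B_j) for all j, where each B_i satisfies: for every coalition X with i ∈ X ⊆ desc(i), X connected, and v_j(X) ≥ v_j(B_j) for all j ∈ X \ {i}, the probability over X ∼ D of v_i(X) > v_i(B_i) is less than ε/n. Then the probability over S ∼ D that S strongly blocks π and is connected within the tree is less than ε. -/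
open MeasureTheory

/- Players are nodes of a rooted tree given by a parent map; `desc i` is the set
of descendants of `i` (including `i`); the tree graph joins each non-root vertex
to its parent. `π j` is the coalition of `j` in the partition `π`. -/
theorem stmt12 {N : Type*} [Fintype N] [MeasurableSpace (Set N)]
    (r : N) (parent : N → N)
    (hroot : parent r = r) (hreach : ∀ i : N, ∃ k : ℕ, parent^[k] i = r)
    (desc : N → Set N) (hdesc : ∀ i, desc i = {j | ∃ k : ℕ, parent^[k] j = i})
    (G : SimpleGraph N) (hG : G = SimpleGraph.fromRel (fun a b => parent a = b))
    (v : N → Set N → ℝ) (B : N → Set N) (π : N → Set N)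
    (D : Measure (Set N)) [IsProbabilityMeasure D]
    (ε : ℝ) (n : ℕ) (hn : n = Fintype.card N)
    (hπ : ∀ j, v j (B j) ≤ v j (π j))
    (hB : ∀ i : N, D {X : Set N | i ∈ X ∧ X ⊆ desc i ∧ (G.induce X).Connected ∧
        (∀ j ∈ X, j ≠ i → v j (B j) ≤ v j X) ∧ v i (B i) < v i X}
      < ENNReal.ofReal (ε / n)) :
    D {S : Set N | (G.induce S).Connected ∧ ∀ j ∈ S, v j (π j) < v j S}
      < ENNReal.ofReal ε := by
  classical
  -- depth function
  set d : N → ℕ := fun x => Nat.find (hreach x) with hd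
  have L1 : ∀ x, parent^[d x] x = r := fun x => Nat.find_spec (hreach x)
  have hfix : ∀ k, parent^[k] r = r := fun k => Function.iterate_fixed hroot k
  -- canonical ancestor lemma
  have L3 : ∀ z x a, parent^[a] z = x → d x ≤ d z ∧ parent^[d z - d x] z = x := by
    intro z x a h
    by_cases hle : a ≤ d z
    · have h1 : parent^[d z - a] x = r := by
        rw [← h, ← Function.iterate_add_apply, Nat.sub_add_cancel hle]
        exact L1 z
      have hdx : d x ≤ d z - a := Nat.find_le h1
      have h2 : parent^[d x + a] z = r := by
        rw [Function.iterate_add_apply, h]; exact L1 x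
      have hdz : d z ≤ d x + a := Nat.find_le h2
      have hxa : d x = d z - a := le_antisymm hdx (by omega)
      constructor
      · omega
      · have hh : d z - d x = a := by omega
        rw [hh, h]
    · push_neg at hle
      have hx : x = r := by
        have ha : a = (a - d z) + d z := by omega
        rw [← h, ha, Function.iterate_add_apply, L1 z]
        exact hfix _
      have hdxz : d x = 0 := by
        have h0 : parent^[0] x = r := by simpa using hx
        exact Nat.le_zero.mp (Nat.find_le h0)
      refine ⟨by omega, ?_⟩
      rw [hdxz, Nat.sub_zero, L1 z, hx]
  -- the bad sets
  set Bad : N → Set (Set N) := fun i => {X : Set N | i ∈ X ∧ X ⊆ desc i ∧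
      (G.induce X).Connected ∧ (∀ j ∈ X, j ≠ i → v j (B j) ≤ v j X) ∧
      v i (B i) < v i X} with hBad
  -- inclusion
  have hsub : {S : Set N | (G.induce S).Connected ∧ ∀ j ∈ S, v j (π j) < v j S}
      ⊆ ⋃ i, Bad i := by
    intro S hS
    obtain ⟨hconn, hblock⟩ := hS
    obtain ⟨x0⟩ : Nonempty ↥S := hconn.nonempty
    obtain ⟨i, hiS, hmin⟩ := Set.exists_min_image S d (Set.toFinite S) ⟨x0, x0.2⟩
    -- every element of S is a descendant of i
    have aux : ∀ (u w : ↥S), (G.induce S).Walk u w → (w : N) = i →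
        ∃ k, parent^[k] (u : N) = i := by
      intro u w p
      induction p with
      | nil => exact fun h => ⟨0, h⟩
      | @cons u z w h p ih =>
        intro hw
        obtain ⟨k, hk⟩ := ih hw
        have hadj : G.Adj (u : N) (z : N) := h
        rw [hG, SimpleGraph.fromRel_adj] at hadj
        obtain ⟨hne, hor | hor⟩ := hadj
        · exact ⟨k + 1, by rw [Function.iterate_succ_apply, hor, hk]⟩
        · -- parent z = u, so u is an ancestor of z; compare with i
          have hu := L3 (z : N) (u : N) 1 (by simpa using hor)
          have hi := L3 (z : N) i k hk
          have hdi : d i ≤ d (u : N) := hmin (u : N) u.2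
          have hle : d (z : N) - d (u : N) ≤ d (z : N) - d i := by omega
          have h5 : parent^[((d (z : N) - d i) - (d (z : N) - d (u : N)))
              + (d (z : N) - d (u : N))] (z : N) = i := by
            rw [Nat.sub_add_cancel hle]; exact hi.2
          rw [Function.iterate_add_apply, hu.2] at h5
          exact ⟨_, h5⟩
    have key : ∀ x : ↥S, ∃ k, parent^[k] (x : N) = i := by
      intro x
      obtain ⟨p⟩ := hconn.preconnected x ⟨i, hiS⟩
      exact aux x ⟨i, hiS⟩ p rfl
    refine Set.mem_iUnion.mpr ⟨i, hiS, ?_, hconn, ?_, ?_⟩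
    · intro j hj
      rw [hdesc]
      exact key ⟨j, hj⟩
    · intro j hj _
      exact le_of_lt (lt_of_le_of_lt (hπ j) (hblock j hj))
    · exact lt_of_le_of_lt (hπ i) (hblock i hiS)
  -- positivity of ε / n
  have hpos : 0 < ENNReal.ofReal (ε / n) := lt_of_le_of_lt zero_le (hB r)
  have hεn : 0 < ε / (n : ℝ) := ENNReal.ofReal_pos.mp hpos
  have hn0 : 0 < n := by
    rw [hn]; exact Fintype.card_pos_iff.mpr ⟨r⟩
  have hnr : (0 : ℝ) < n := by exact_mod_cast hn0
  have hε : 0 < ε := by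
    have hmul := mul_pos hεn hnr
    rwa [div_mul_cancel₀ _ (ne_of_gt hnr)] at hmul
  -- measure computation
  calc D {S : Set N | (G.induce S).Connected ∧ ∀ j ∈ S, v j (π j) < v j S}
      ≤ D (⋃ i, Bad i) := measure_mono hsub
    _ ≤ ∑' i, D (Bad i) := measure_iUnion_le _
    _ = ∑ i, D (Bad i) := tsum_fintype _
    _ < (∑ _x ∈ (Finset.univ : Finset N), ENNReal.ofReal (ε / n)) :=
        ENNReal.sum_lt_sum_of_nonempty ⟨r, Finset.mem_univ r⟩ (fun i _ => hB i)
    _ = (n : ENNReal) * ENNReal.ofReal (ε / n) := by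
        rw [Finset.sum_const, Finset.card_univ, ← hn, nsmul_eq_mul]
    _ = ENNReal.ofReal ε := by
        rw [← ENNReal.ofReal_natCast n, ← ENNReal.ofReal_mul (le_of_lt hnr)]
        rw [mul_div_cancel₀ ε (ne_of_gt hnr)]
end
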